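/- Let F(y) = (1/√π) ∫_{−y}^{y} e^{−x²} dx for y ≥ 0 (the cumulative distribution function of the absolute value of a centered Gaussian with variance 1/2). Then as n → ∞, ∫₀^∞ (1 − F(y))ⁿ dy = √π/(2(n+1)) + o(n^{−2}); that is, n² · (∫₀^∞ (1 − F(y))ⁿ dy − √π/(2(n+1))) → 0. -/

import Mathlib

open MeasureTheory Real Filter Set Topology

/-- The cumulative distribution function of `|Z|` where `Z` is a centered Gaussian of
variance `1/2`: `F y = (1/√π) ∫_{-y}^{y} e^{-x²} dx`. -/
noncomputable def gaussAbsCDF (y : ℝ) : ℝ :=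
  (Real.sqrt Real.pi)⁻¹ * ∫ x in (-y)..y, Real.exp (-x ^ 2)


lemma cont_g : Continuous (fun x : ℝ => Real.exp (-x ^ 2)) := by continuity

lemma gaussAbsCDF_eq (y : ℝ) :
    gaussAbsCDF y = (Real.sqrt Real.pi)⁻¹ * (2 * ∫ x in (0:ℝ)..y, Real.exp (-x ^ 2)) := by
  have h1 : (∫ x in (-y)..(0:ℝ), Real.exp (-x ^ 2)) = ∫ x in (0:ℝ)..y, Real.exp (-x ^ 2) := by
    have := intervalIntegral.integral_comp_neg (a := (0:ℝ)) (b := y)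
      (fun x => Real.exp (-x ^ 2))
    simp only [neg_neg, neg_zero, even_two.neg_pow] at this ⊢
    rw [← this]
  have h2 := intervalIntegral.integral_add_adjacent_intervals
    (a := -y) (b := 0) (c := y) (f := fun x => Real.exp (-x ^ 2)) (μ := volume)
    (cont_g.intervalIntegrable _ _) (cont_g.intervalIntegrable _ _)
  rw [gaussAbsCDF, ← h2, h1]; ring

lemma hasDerivAt_gaussAbsCDF (y : ℝ) :
    HasDerivAt gaussAbsCDF ((Real.sqrt Real.pi)⁻¹ * (2 * Real.exp (-y ^ 2))) y := by
  have heq : gaussAbsCDF = fun y => (Real.sqrt Real.pi)⁻¹ *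
      (2 * ∫ x in (0:ℝ)..y, Real.exp (-x ^ 2)) := funext gaussAbsCDF_eq
  rw [heq]
  have h : HasDerivAt (fun y : ℝ => ∫ x in (0:ℝ)..y, Real.exp (-x ^ 2))
      (Real.exp (-y ^ 2)) y :=
    intervalIntegral.integral_hasDerivAt_right (cont_g.intervalIntegrable _ _)
      (cont_g.stronglyMeasurable.stronglyMeasurableAtFilter) cont_g.continuousAt
  exact (h.const_mul 2).const_mul _

lemma tendsto_gaussAbsCDF : Tendsto gaussAbsCDF atTop (𝓝 1) := by
  have heq : gaussAbsCDF = fun y => (Real.sqrt Real.pi)⁻¹ *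
      (2 * ∫ x in (0:ℝ)..y, Real.exp (-x ^ 2)) := funext gaussAbsCDF_eq
  rw [heq]
  have hint : IntegrableOn (fun x : ℝ => Real.exp (-x ^ 2)) (Ioi 0) := by
    have := (integrable_exp_neg_mul_sq (one_pos)).integrableOn (s := Ioi (0:ℝ))
    simpa using this
  have h := intervalIntegral_tendsto_integral_Ioi 0 hint tendsto_id
  have hval : (∫ x in Ioi (0:ℝ), Real.exp (-x ^ 2)) = Real.sqrt Real.pi / 2 := by
    have := integral_gaussian_Ioi 1
    simpa using this
  rw [hval] at h
  have := (h.const_mul 2).const_mul (Real.sqrt Real.pi)⁻¹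
  convert this using 2
  · rfl
  have hπ : Real.sqrt Real.pi ≠ 0 := by positivity
  field_simp

lemma gaussAbsCDF_zero : gaussAbsCDF 0 = 0 := by
  simp [gaussAbsCDF]

lemma cont_F : Continuous gaussAbsCDF :=
  continuous_iff_continuousAt.2 fun y => (hasDerivAt_gaussAbsCDF y).continuousAt

lemma I_nonneg {y : ℝ} (hy : 0 ≤ y) : 0 ≤ ∫ x in (0:ℝ)..y, Real.exp (-x ^ 2) :=
  intervalIntegral.integral_nonneg hy (fun x _ => (Real.exp_pos _).le)

lemma I_le {y : ℝ} : (∫ x in (0:ℝ)..y, Real.exp (-x ^ 2)) ≤ Real.sqrt Real.pi / 2 := by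
  rcases le_or_gt y 0 with hy | hy
  · rw [intervalIntegral.integral_of_ge hy]
    have h1 : 0 ≤ ∫ x in Ioc y (0:ℝ), Real.exp (-x ^ 2) :=
      setIntegral_nonneg measurableSet_Ioc fun x _ => (Real.exp_pos _).le
    have h2 : (0:ℝ) < Real.sqrt Real.pi := Real.sqrt_pos.2 Real.pi_pos
    linarith
  · have hint : IntegrableOn (fun x : ℝ => Real.exp (-x ^ 2)) (Ioi 0) := by
      have := (integrable_exp_neg_mul_sq (one_pos)).integrableOn (s := Ioi (0:ℝ))
      simpa using this
    rw [intervalIntegral.integral_of_le hy.le]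
    have h := setIntegral_mono_set hint
      (Filter.Eventually.of_forall fun x => (Real.exp_pos _).le)
      (HasSubset.Subset.eventuallyLE (Ioc_subset_Ioi_self (a := y) (b := (0:ℝ))))
    have hval : (∫ x in Ioi (0:ℝ), Real.exp (-x ^ 2)) = Real.sqrt Real.pi / 2 := by
      simpa using integral_gaussian_Ioi 1
    rw [hval] at h
    exact h

lemma gaussAbsCDF_nonneg {y : ℝ} (hy : 0 ≤ y) : 0 ≤ gaussAbsCDF y := by
  rw [gaussAbsCDF_eq]
  have := I_nonneg hy
  positivity

lemma gaussAbsCDF_le_one {y : ℝ} : gaussAbsCDF y ≤ 1 := by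
  rw [gaussAbsCDF_eq]
  have h := I_le (y := y)
  have hπ : (0:ℝ) < Real.sqrt Real.pi := Real.sqrt_pos.2 Real.pi_pos
  rw [← inv_mul_cancel₀ hπ.ne']
  have : 2 * (∫ x in (0:ℝ)..y, Real.exp (-x ^ 2)) ≤ Real.sqrt Real.pi := by linarith
  exact mul_le_mul_of_nonneg_left this (by positivity)

lemma integrableOn_pow_mul_gauss (n : ℕ) :
    IntegrableOn (fun y => (1 - gaussAbsCDF y) ^ n *
      ((Real.sqrt Real.pi)⁻¹ * (2 * Real.exp (-y ^ 2)))) (Ioi 0) := by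
  have hint : IntegrableOn (fun x : ℝ => (Real.sqrt Real.pi)⁻¹ * (2 * Real.exp (-x ^ 2)))
      (Ioi 0) := by
    have := ((integrable_exp_neg_mul_sq (one_pos)).integrableOn (s := Ioi (0:ℝ)))
    simpa [IntegrableOn] using ((this.const_mul 2).const_mul (Real.sqrt Real.pi)⁻¹)
  refine Integrable.mono' hint ?_ ?_
  · exact (((continuous_const.sub cont_F).pow n).mul
      (continuous_const.mul (continuous_const.mul cont_g))).aestronglyMeasurable
  · rw [ae_restrict_iff' measurableSet_Ioi]
    refine Eventually.of_forall fun y hy => ?_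
    have h0 : (0:ℝ) ≤ 1 - gaussAbsCDF y := by
      have := gaussAbsCDF_le_one (y := y); linarith
    have h1 : 1 - gaussAbsCDF y ≤ 1 := by
      have := gaussAbsCDF_nonneg (le_of_lt hy); linarith
    have hπ : (0:ℝ) < Real.sqrt Real.pi := Real.sqrt_pos.2 Real.pi_pos
    have hw : (0:ℝ) ≤ (Real.sqrt Real.pi)⁻¹ * (2 * Real.exp (-y ^ 2)) := by positivity
    rw [Real.norm_eq_abs, abs_mul, abs_of_nonneg (pow_nonneg h0 n), abs_of_nonneg hw]
    nlinarith [pow_le_one₀ h0 h1 (n := n)]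

lemma key_identity (n : ℕ) :
    (∫ y in Ioi (0:ℝ), (1 - gaussAbsCDF y) ^ n *
        ((Real.sqrt Real.pi)⁻¹ * (2 * Real.exp (-y ^ 2)))) = 1 / ((n:ℝ) + 1) := by
  have hne : ((n:ℝ) + 1) ≠ 0 := by positivity
  have hderiv : ∀ y ∈ Ici (0:ℝ),
      HasDerivAt (fun y => -(1 - gaussAbsCDF y) ^ (n+1) / ((n:ℝ)+1))
      ((1 - gaussAbsCDF y) ^ n * ((Real.sqrt Real.pi)⁻¹ * (2 * Real.exp (-y ^ 2)))) y := by
    intro y _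
    have h := ((hasDerivAt_gaussAbsCDF y).const_sub 1).pow (n+1)
    have h2 := (h.neg.div_const ((n:ℝ)+1))
    refine h2.congr_deriv ?_
    push_cast
    field_simp
  have htop : Tendsto (fun y => -(1 - gaussAbsCDF y) ^ (n+1) / ((n:ℝ)+1)) atTop (𝓝 0) := by
    have h1 : Tendsto (fun y => 1 - gaussAbsCDF y) atTop (𝓝 0) := by
      simpa using tendsto_gaussAbsCDF.const_sub 1
    have h2 := ((h1.pow (n+1)).neg).div_const ((n:ℝ)+1)
    simpa using h2
  have hcalc := integral_Ioi_of_hasDerivAt_of_tendsto'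
    hderiv (integrableOn_pow_mul_gauss n) htop
  rw [hcalc, gaussAbsCDF_zero]
  rw [sub_zero, one_pow, zero_sub, neg_div, neg_neg]

lemma sqrt_pi_bounds : 4/3 ≤ Real.sqrt Real.pi ∧ Real.sqrt Real.pi ≤ 2 := by
  have hs : Real.sqrt Real.pi ^ 2 = Real.pi := Real.sq_sqrt Real.pi_pos.le
  have hsp : 0 < Real.sqrt Real.pi := Real.sqrt_pos.2 Real.pi_pos
  have h3 : 3 < Real.pi := Real.pi_gt_three
  have h4 : Real.pi < 4 := Real.pi_lt_d2.trans (by norm_num)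
  constructor <;> nlinarith

lemma tail_bound {y : ℝ} (hy : 0 ≤ y) : 1 - gaussAbsCDF y ≤ Real.exp (-(y/2)) := by
  have hsp : 0 < Real.sqrt Real.pi := Real.sqrt_pos.2 Real.pi_pos
  obtain ⟨hs1, hs2⟩ := sqrt_pi_bounds
  rcases le_or_gt y 1 with hy1 | hy1
  · -- small y : F y ≥ y/2
    have hIineq : (∫ x in (0:ℝ)..y, Real.exp (-x)) ≤ ∫ x in (0:ℝ)..y, Real.exp (-x ^ 2) := by
      refine intervalIntegral.integral_mono_on hy
        ((Real.continuous_exp.comp continuous_neg).intervalIntegrable _ _)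
        (cont_g.intervalIntegrable _ _) fun x hx => ?_
      have hx0 : 0 ≤ x := hx.1
      have hx1 : x ≤ 1 := hx.2.trans hy1
      exact Real.exp_le_exp.2 (by nlinarith)
    have hIval : (∫ x in (0:ℝ)..y, Real.exp (-x)) = 1 - Real.exp (-y) := by
      have h := intervalIntegral.integral_comp_neg (a := (0:ℝ)) (b := y) Real.exp
      rw [h, integral_exp]
      norm_num
    have hexp : Real.exp (-y) ≤ 1 - y/2 := by
      have h1 : y + 1 ≤ Real.exp y := Real.add_one_le_exp y
      have h2 : 0 < Real.exp y := Real.exp_pos y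
      rw [Real.exp_neg, inv_le_iff_one_le_mul₀ h2]
      nlinarith
    have hF : y / 2 ≤ gaussAbsCDF y := by
      rw [gaussAbsCDF_eq]
      have hI : y / 2 ≤ ∫ x in (0:ℝ)..y, Real.exp (-x ^ 2) := by
        rw [hIval] at hIineq
        linarith
      have hinv : (1:ℝ)/2 ≤ (Real.sqrt Real.pi)⁻¹ := by
        rw [div_le_iff₀ (by norm_num : (0:ℝ) < 2), inv_mul_eq_div, le_div_iff₀ hsp]
        linarith
      nlinarith [inv_pos.2 hsp]
    have hlast : 1 - y/2 ≤ Real.exp (-(y/2)) := by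
      have := Real.add_one_le_exp (-(y/2))
      linarith
    linarith
  · -- large y
    have hint0 : IntegrableOn (fun x : ℝ => Real.exp (-x ^ 2)) (Ioi 0) := by
      have := (integrable_exp_neg_mul_sq (one_pos)).integrableOn (s := Ioi (0:ℝ))
      simpa using this
    have hsplit : (∫ x in Ioc (0:ℝ) y, Real.exp (-x ^ 2)) + ∫ x in Ioi y, Real.exp (-x ^ 2)
        = ∫ x in Ioi (0:ℝ), Real.exp (-x ^ 2) := by
      rw [← setIntegral_union (Ioc_disjoint_Ioi le_rfl) measurableSet_Ioi
        (hint0.mono_set Ioc_subset_Ioi_self) (hint0.mono_set (Ioi_subset_Ioi hy)),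
        Ioc_union_Ioi_eq_Ioi hy]
    have hexpint : IntegrableOn (fun x : ℝ => Real.exp (-x)) (Ioi y) := by
      have := exp_neg_integrableOn_Ioi y (one_pos)
      simpa using this
    have htail : (∫ x in Ioi y, Real.exp (-x ^ 2)) ≤ Real.exp (-y) := by
      have hmono : (∫ x in Ioi y, Real.exp (-x ^ 2)) ≤ ∫ x in Ioi y, Real.exp (-x) := by
        refine setIntegral_mono_on (hint0.mono_set (Ioi_subset_Ioi hy)) hexpint
          measurableSet_Ioi fun x hx => ?_
        have hx1 : 1 ≤ x := hy1.le.trans (le_of_lt hx)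
        exact Real.exp_le_exp.2 (by nlinarith)
      rw [integral_exp_neg_Ioi] at hmono
      exact hmono
    have hIoc : (∫ x in Ioc (0:ℝ) y, Real.exp (-x ^ 2)) = ∫ x in (0:ℝ)..y, Real.exp (-x ^ 2) :=
      (intervalIntegral.integral_of_le (by linarith)).symm
    have hval : (∫ x in Ioi (0:ℝ), Real.exp (-x ^ 2)) = Real.sqrt Real.pi / 2 := by
      simpa using integral_gaussian_Ioi 1
    have hG : 1 - gaussAbsCDF y ≤ (Real.sqrt Real.pi)⁻¹ * (2 * Real.exp (-y)) := by
      rw [gaussAbsCDF_eq]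
      have hI : Real.sqrt Real.pi / 2 - Real.exp (-y) ≤ ∫ x in (0:ℝ)..y, Real.exp (-x ^ 2) := by
        rw [← hIoc]
        linarith [hsplit, htail, hval]
      have key : Real.sqrt Real.pi ≤ 2 * (∫ x in (0:ℝ)..y, Real.exp (-x ^ 2))
          + 2 * Real.exp (-y) := by linarith
      rw [sub_le_iff_le_add]
      have := mul_le_mul_of_nonneg_left key (le_of_lt (inv_pos.2 hsp))
      rw [inv_mul_cancel₀ hsp.ne'] at this
      rw [mul_add] at this
      linarith
    have hfin : (Real.sqrt Real.pi)⁻¹ * (2 * Real.exp (-y)) ≤ Real.exp (-(y/2)) := by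
      have he : Real.exp (-y) = Real.exp (-(y/2)) * Real.exp (-(y/2)) := by
        rw [← Real.exp_add]; ring_nf
      have hhalf : Real.exp (-(y/2)) ≤ 2/3 := by
        rw [Real.exp_neg, inv_le_iff_one_le_mul₀ (Real.exp_pos _)]
        nlinarith [Real.add_one_le_exp (y/2)]
      rw [he]
      have hpos := Real.exp_pos (-(y/2))
      rw [inv_mul_eq_div, div_le_iff₀ hsp]
      nlinarith
    linarith

lemma integrableOn_exp_half : IntegrableOn (fun y : ℝ => Real.exp (-(y/2))) (Ioi 0) := by
  have := exp_neg_integrableOn_Ioi 0 (by norm_num : (0:ℝ) < 1/2)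
  refine this.congr_fun (fun x _ => by ring_nf) measurableSet_Ioi

lemma integrableOn_pow {n : ℕ} (hn : 1 ≤ n) :
    IntegrableOn (fun y => (1 - gaussAbsCDF y) ^ n) (Ioi 0) := by
  refine Integrable.mono' integrableOn_exp_half
    ((continuous_const.sub cont_F).pow n).aestronglyMeasurable ?_
  rw [ae_restrict_iff' measurableSet_Ioi]
  refine Eventually.of_forall fun y hy => ?_
  have h0 : (0:ℝ) ≤ 1 - gaussAbsCDF y := by
    have := gaussAbsCDF_le_one (y := y); linarith
  have h1 : 1 - gaussAbsCDF y ≤ 1 := by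
    have := gaussAbsCDF_nonneg (le_of_lt hy); linarith
  rw [Real.norm_eq_abs, abs_of_nonneg (pow_nonneg h0 n)]
  calc (1 - gaussAbsCDF y) ^ n ≤ (1 - gaussAbsCDF y) ^ 1 :=
        pow_le_pow_of_le_one h0 h1 hn
    _ = 1 - gaussAbsCDF y := pow_one _
    _ ≤ Real.exp (-(y/2)) := tail_bound (le_of_lt hy)

lemma integrableOn_pow_mul_exp (n : ℕ) :
    IntegrableOn (fun y => (1 - gaussAbsCDF y) ^ n * Real.exp (-y ^ 2)) (Ioi 0) := by
  have h : IntegrableOn (fun y => Real.sqrt Real.pi / 2 * ((1 - gaussAbsCDF y) ^ n *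
      ((Real.sqrt Real.pi)⁻¹ * (2 * Real.exp (-y ^ 2))))) (Ioi 0) :=
    (integrableOn_pow_mul_gauss n).const_mul (Real.sqrt Real.pi / 2)
  have hsp : 0 < Real.sqrt Real.pi := Real.sqrt_pos.2 Real.pi_pos
  refine h.congr_fun (fun x _ => ?_) measurableSet_Ioi
  field_simp

lemma integral_pow_mul_exp (n : ℕ) :
    (∫ y in Ioi (0:ℝ), (1 - gaussAbsCDF y) ^ n * Real.exp (-y ^ 2))
      = Real.sqrt Real.pi / (2 * ((n:ℝ) + 1)) := by
  have hsp : 0 < Real.sqrt Real.pi := Real.sqrt_pos.2 Real.pi_pos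
  have h := key_identity n
  have hre : ∀ y : ℝ, (1 - gaussAbsCDF y) ^ n * ((Real.sqrt Real.pi)⁻¹ * (2 * Real.exp (-y ^ 2)))
      = ((Real.sqrt Real.pi)⁻¹ * 2) * ((1 - gaussAbsCDF y) ^ n * Real.exp (-y ^ 2)) :=
    fun y => by ring
  simp_rw [hre] at h
  rw [MeasureTheory.integral_const_mul] at h
  have hne : ((n:ℝ) + 1) ≠ 0 := by positivity
  have hne2 : (Real.sqrt Real.pi)⁻¹ * 2 ≠ 0 := by positivity
  field_simp at h ⊢
  linarith

lemma diff_eq {n : ℕ} (hn : 1 ≤ n) :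
    (∫ y in Ioi (0:ℝ), (1 - gaussAbsCDF y) ^ n) - Real.sqrt Real.pi / (2 * ((n:ℝ) + 1))
      = ∫ y in Ioi (0:ℝ), (1 - gaussAbsCDF y) ^ n * (1 - Real.exp (-y ^ 2)) := by
  rw [← integral_pow_mul_exp n,
    ← MeasureTheory.integral_sub (integrableOn_pow hn) (integrableOn_pow_mul_exp n)]
  congr 1
  funext y
  ring

lemma integral_sq_exp {r : ℝ} (hr : 0 < r) :
    (∫ y in Ioi (0:ℝ), y ^ 2 * Real.exp (-(r * y))) = 2 / r ^ 3 := by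
  have h := integral_rpow_mul_exp_neg_mul_Ioi (a := 3) (by norm_num) hr
  have h2 : ∀ y ∈ Ioi (0:ℝ), y ^ ((3:ℝ)-1) * Real.exp (-(r * y))
      = y ^ 2 * Real.exp (-(r * y)) := by
    intro y _
    rw [show (3:ℝ)-1 = ((2:ℕ):ℝ) by norm_num, Real.rpow_natCast]
  rw [setIntegral_congr_fun measurableSet_Ioi h2] at h
  have hG : Real.Gamma 3 = 2 := by
    rw [show (3:ℝ) = ((2:ℕ):ℝ)+1 by norm_num, Real.Gamma_nat_eq_factorial]
    norm_num
  rw [h, show ((1:ℝ)/r) ^ (3:ℝ) = ((1:ℝ)/r) ^ ((3:ℕ):ℝ) by norm_num, Real.rpow_natCast, hG]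
  field_simp

lemma integrableOn_sq_exp {r : ℝ} (hr : 0 < r) :
    IntegrableOn (fun y : ℝ => y ^ 2 * Real.exp (-(r * y))) (Ioi 0) := by
  have h := integrableOn_rpow_mul_exp_neg_mul_rpow
    (s := 2) (p := 1) (by norm_num) one_pos hr
  refine h.congr_fun (fun x hx => ?_) measurableSet_Ioi
  beta_reduce
  rw [Real.rpow_one, show (2:ℝ) = ((2:ℕ):ℝ) by norm_num, Real.rpow_natCast, neg_mul]

lemma diff_le {n : ℕ} (hn : 1 ≤ n) :
    (∫ y in Ioi (0:ℝ), (1 - gaussAbsCDF y) ^ n * (1 - Real.exp (-y ^ 2)))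
      ≤ 16 / (n:ℝ) ^ 3 := by
  have hn0 : (0:ℝ) < n := by exact_mod_cast hn
  have hr : (0:ℝ) < (n:ℝ)/2 := by linarith
  have hfint : IntegrableOn
      (fun y => (1 - gaussAbsCDF y) ^ n * (1 - Real.exp (-y ^ 2))) (Ioi 0) := by
    have h : IntegrableOn (fun y => (1 - gaussAbsCDF y) ^ n
        - (1 - gaussAbsCDF y) ^ n * Real.exp (-y ^ 2)) (Ioi 0) :=
      (integrableOn_pow hn).sub (integrableOn_pow_mul_exp n)
    refine h.congr_fun (fun x _ => by ring) measurableSet_Ioi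
  have hmono : (∫ y in Ioi (0:ℝ), (1 - gaussAbsCDF y) ^ n * (1 - Real.exp (-y ^ 2)))
      ≤ ∫ y in Ioi (0:ℝ), y ^ 2 * Real.exp (-((n:ℝ)/2 * y)) := by
    refine setIntegral_mono_on hfint (integrableOn_sq_exp hr) measurableSet_Ioi fun y hy => ?_
    have hy0 : (0:ℝ) < y := hy
    have h0 : (0:ℝ) ≤ 1 - gaussAbsCDF y := by
      have := gaussAbsCDF_le_one (y := y); linarith
    have hpow : (1 - gaussAbsCDF y) ^ n ≤ Real.exp (-((n:ℝ)/2 * y)) := by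
      calc (1 - gaussAbsCDF y) ^ n ≤ Real.exp (-(y/2)) ^ n :=
            pow_le_pow_left₀ h0 (tail_bound hy0.le) n
        _ = Real.exp (-((n:ℝ)/2 * y)) := by
            rw [← Real.exp_nat_mul]; ring_nf
    have hq : 1 - Real.exp (-y ^ 2) ≤ y ^ 2 := by
      have := Real.add_one_le_exp (-y ^ 2)
      linarith
    have hq0 : 0 ≤ 1 - Real.exp (-y ^ 2) := by
      have : Real.exp (-y ^ 2) ≤ 1 := Real.exp_le_one_iff.2 (neg_nonpos.2 (sq_nonneg y))
      linarith
    calc (1 - gaussAbsCDF y) ^ n * (1 - Real.exp (-y ^ 2))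
        ≤ Real.exp (-((n:ℝ)/2 * y)) * y ^ 2 :=
          mul_le_mul hpow hq hq0 (Real.exp_pos _).le
      _ = y ^ 2 * Real.exp (-((n:ℝ)/2 * y)) := by ring
  rw [integral_sq_exp hr] at hmono
  calc (∫ y in Ioi (0:ℝ), (1 - gaussAbsCDF y) ^ n * (1 - Real.exp (-y ^ 2)))
      ≤ 2 / ((n:ℝ)/2) ^ 3 := hmono
    _ = 16 / (n:ℝ) ^ 3 := by field_simp; ring

/-- **Asymptotics of `∫₀^∞ (1 - F y)ⁿ dy`:** as `n → ∞`,
`∫₀^∞ (1 - F y)ⁿ dy = √π/(2(n+1)) + o(n⁻²)`, i.e.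
`n² · (∫₀^∞ (1 - F y)ⁿ dy - √π/(2(n+1))) → 0`. -/
theorem integral_one_sub_gaussAbsCDF_pow_asymptotic :
    Tendsto (fun n : ℕ => (n : ℝ) ^ 2 *
        ((∫ y in Set.Ioi (0 : ℝ), (1 - gaussAbsCDF y) ^ n) -
          Real.sqrt Real.pi / (2 * (n + 1))))
      atTop (nhds 0) := by
  have hupper : Tendsto (fun n : ℕ => 16 / (n:ℝ)) atTop (𝓝 0) :=
    tendsto_const_div_atTop_nhds_zero_nat 16
  have hnonneg : ∀ n : ℕ, 0 ≤ ∫ y in Ioi (0:ℝ),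
      (1 - gaussAbsCDF y) ^ n * (1 - Real.exp (-y ^ 2)) := by
    intro n
    refine setIntegral_nonneg measurableSet_Ioi fun y hy => ?_
    have h0 : (0:ℝ) ≤ 1 - gaussAbsCDF y := by
      have := gaussAbsCDF_le_one (y := y); linarith
    have hq0 : (0:ℝ) ≤ 1 - Real.exp (-y ^ 2) := by
      have : Real.exp (-y ^ 2) ≤ 1 := Real.exp_le_one_iff.2 (neg_nonpos.2 (sq_nonneg y))
      linarith
    exact mul_nonneg (pow_nonneg h0 n) hq0
  refine tendsto_of_tendsto_of_tendsto_of_le_of_le' tendsto_const_nhds hupper ?_ ?_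
  · filter_upwards [eventually_ge_atTop 1] with n hn
    rw [diff_eq hn]
    exact mul_nonneg (sq_nonneg _) (hnonneg n)
  · filter_upwards [eventually_ge_atTop 1] with n hn
    rw [diff_eq hn]
    have hn0 : (0:ℝ) < n := by exact_mod_cast hn
    calc (n:ℝ) ^ 2 * ∫ y in Ioi (0:ℝ), (1 - gaussAbsCDF y) ^ n * (1 - Real.exp (-y ^ 2))
        ≤ (n:ℝ) ^ 2 * (16 / (n:ℝ) ^ 3) :=
          mul_le_mul_of_nonneg_left (diff_le hn) (sq_nonneg _)
      _ = 16 / (n:ℝ) := by field_simp
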